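/- For each positive integer k, let G_k be the graph obtained from 3k disjoint 5-cycles A_i = (a_i, b_i, c_i, d_i, e_i, a_i), i = 1,...,3k, by adding the edges b_i e_{i+1} for i = 1,...,3k−1. Then the broadcast domination number of G_k equals 4k. -/

import Mathlib

open SimpleGraph

variable {V : Type*}

/-- `p` restricted to `{0,…,k}` is an isometric path of length `k` in `G`. -/
def IsIsomPath (G : SimpleGraph V) (p : ℕ → V) (k : ℕ) : Prop :=
  ∀ i j, i ≤ k → j ≤ k → G.dist (p i) (p j) = max i j - min i j

def pathVerts (p : ℕ → V) (k : ℕ) : Set V := {x | ∃ i, i ≤ k ∧ p i = x}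

noncomputable def ecc (G : SimpleGraph V) [Fintype V] (v : V) : ℕ :=
  Finset.univ.sup (fun u => G.dist v u)

noncomputable def grad (G : SimpleGraph V) [Fintype V] : ℕ :=
  sInf (Set.range (ecc G))

noncomputable def gdiam (G : SimpleGraph V) [Fintype V] : ℕ :=
  Finset.univ.sup (fun v => ecc G v)

def IsMultipacking (G : SimpleGraph V) [Fintype V] (M : Set V) : Prop :=
  ∀ v : V, ∀ r : ℕ, 1 ≤ r → r ≤ gdiam G →
    (M ∩ {u | G.dist v u ≤ r}).ncard ≤ r

noncomputable def mp (G : SimpleGraph V) [Fintype V] : ℕ :=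
  sSup {n | ∃ M : Set V, IsMultipacking G M ∧ M.ncard = n}

def IsDomBroadcast (G : SimpleGraph V) [Fintype V] (f : V → ℕ) : Prop :=
  (∀ v, f v ≤ gdiam G) ∧ ∀ u : V, ∃ v : V, 1 ≤ f v ∧ G.dist u v ≤ f v

noncomputable def gammaB (G : SimpleGraph V) [Fintype V] : ℕ :=
  sInf {n | ∃ f : V → ℕ, IsDomBroadcast G f ∧ ∑ v, f v = n}

noncomputable def gammaDom (G : SimpleGraph V) [Fintype V] : ℕ :=
  sInf {n | ∃ D : Finset V, (∀ u : V, ∃ v ∈ D, u = v ∨ G.Adj u v) ∧ D.card = n}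

def IsFracMP (G : SimpleGraph V) [Fintype V] (w : V → ℝ) : Prop :=
  (∀ v, 0 ≤ w v) ∧ ∀ v : V, ∀ r : ℕ, 1 ≤ r →
    (∑ u ∈ Finset.univ.filter (fun u => G.dist v u ≤ r), w u) ≤ r

noncomputable def mpf (G : SimpleGraph V) [Fintype V] : ℝ :=
  sSup {s | ∃ w : V → ℝ, IsFracMP G w ∧ ∑ v, w v = s}

/-- A cactus: connected and every edge lies on at most one cycle. -/
def IsCactus (G : SimpleGraph V) : Prop :=
  G.Connected ∧ ∀ (u v : V) (c₁ : G.Walk u u) (c₂ : G.Walk v v),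
    c₁.IsCycle → c₂.IsCycle → ∀ e, e ∈ c₁.edges → e ∈ c₂.edges →
      (∀ e', e' ∈ c₁.edges ↔ e' ∈ c₂.edges)

def pentRel (k : ℕ) (x y : Fin (3*k) × Fin 5) : Prop :=
  (x.1 = y.1 ∧ (x.2.val + 1) % 5 = y.2.val) ∨
  (x.1.val + 1 = y.1.val ∧ x.2.val = 1 ∧ y.2.val = 4)

def Gk (k : ℕ) : SimpleGraph (Fin (3*k) × Fin 5) := SimpleGraph.fromRel (pentRel k)


/-- distance on the 5-cycle, for x y < 5 -/
def d5 (x y : ℕ) : ℕ := min ((x + 5 - y) % 5) ((y + 5 - x) % 5)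

/-- distance formula for Gk on coordinates -/
def DD (i x j y : ℕ) : ℕ :=
  if i = j then d5 x y
  else if i < j then d5 x 1 + 3*(j-i) - 2 + d5 4 y
  else d5 x 4 + 3*(i-j) - 2 + d5 1 y

lemma d5_self (x : ℕ) : d5 x x = 0 := by simp [d5]

lemma d5_le_two {x y : ℕ} (hx : x < 5) (hy : y < 5) : d5 x y ≤ 2 := by
  interval_cases x <;> interval_cases y <;> decide

lemma DD_self (i x : ℕ) : DD i x i x = 0 := by simp [DD, d5_self]

-- adjacency helpers
lemma adj_pent {k : ℕ} (i : Fin (3*k)) (x y : Fin 5) (h : (x.val + 1) % 5 = y.val) :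
    (Gk k).Adj (i, x) (i, y) := by
  rw [Gk, SimpleGraph.fromRel_adj]
  refine ⟨?_, Or.inl (Or.inl ⟨rfl, h⟩)⟩
  intro he
  have hxy : x = y := by
    have := congrArg Prod.snd he; simpa using this
  subst hxy
  omega

lemma adj_cross {k : ℕ} (i j : Fin (3*k)) (hij : i.val + 1 = j.val) :
    (Gk k).Adj (i, (1 : Fin 5)) (j, (4 : Fin 5)) := by
  rw [Gk, SimpleGraph.fromRel_adj]
  refine ⟨?_, Or.inl (Or.inr ⟨hij, rfl, rfl⟩)⟩
  intro he
  have := congrArg (fun p => (Prod.fst p : Fin (3*k)).val) he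
  simp at this; omega

-- steps within a pentagon: (i,x) adjacent to (i, x+1 mod 5)
lemma adj_step {k : ℕ} (i : Fin (3*k)) (x : Fin 5) :
    (Gk k).Adj (i, x) (i, ⟨(x.val + 1) % 5, Nat.mod_lt _ (by norm_num)⟩) :=
  adj_pent i x _ rfl

lemma reach_pent {k : ℕ} (i : Fin (3*k)) (x y : Fin 5) :
    (Gk k).Reachable (i, x) (i, y) := by
  have key : ∀ n : ℕ, ∀ x : Fin 5, (Gk k).Reachable (i, x) (i, ⟨(x.val + n) % 5, Nat.mod_lt _ (by norm_num)⟩) := by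
    intro n
    induction n with
    | zero => intro x; exact Reachable.refl _ |>.mono (le_refl _) |>.trans (by
        have : (⟨(x.val + 0) % 5, Nat.mod_lt _ (by norm_num)⟩ : Fin 5) = x := by
          ext; simp [Nat.mod_eq_of_lt x.isLt]
        rw [this])
    | succ n ih =>
      intro x
      refine ((adj_step i x).reachable).trans ?_
      have h2 := ih ⟨(x.val + 1) % 5, Nat.mod_lt _ (by norm_num)⟩
      have : ((x.val + 1) % 5 + n) % 5 = (x.val + (n+1)) % 5 := by omega
      convert h2 using 2
      ext
      simp [this]
  obtain ⟨n, hn⟩ : ∃ n, (x.val + n) % 5 = y.val := ⟨(y.val + 5 - x.val) % 5, by omega⟩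
  have := key n x
  rwa [show (⟨(x.val + n) % 5, Nat.mod_lt _ (by norm_num)⟩ : Fin 5) = y from by ext; simp [hn]] at this

lemma gk_connected {k : ℕ} (hk : 1 ≤ k) : (Gk k).Connected := by
  have h3k : 0 < 3 * k := by omega
  rw [connected_iff]
  refine ⟨?_, ⟨((⟨0, h3k⟩ : Fin (3*k)), 0)⟩⟩
  -- every vertex reaches (i0, ...) ; show all reachable to (0,0)-pentagon chain
  have chain : ∀ n : ℕ, ∀ (i : Fin (3*k)), i.val = n → (Gk k).Reachable (i, (4:Fin 5)) ((⟨0, h3k⟩ : Fin (3*k)), 0) := by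
    intro n
    induction n with
    | zero =>
      intro i hi
      have : i = ⟨0, h3k⟩ := by ext; simp [hi]
      subst this
      exact reach_pent _ _ _
    | succ n ih =>
      intro i hi
      have hn : n < 3 * k := by omega
      have h1 : (Gk k).Reachable (i, (4:Fin 5)) ((⟨n, hn⟩ : Fin (3*k)), (1:Fin 5)) :=
        ((adj_cross ⟨n, hn⟩ i (by simp [hi])).reachable).symm
      exact h1.trans ((reach_pent _ _ _).trans (ih ⟨n, hn⟩ rfl))
  rintro ⟨i, x⟩ ⟨j, y⟩
  exact ((reach_pent i x 4).trans (chain i.val i rfl)).trans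
    (((reach_pent j y 4).trans (chain j.val j rfl)).symm)

lemma d5_zero {x y : ℕ} (hx : x < 5) (hy : y < 5) (h : d5 x y = 0) : x = y := by
  interval_cases x <;> interval_cases y <;> simp_all [d5]

lemma d5_one {x y : ℕ} (hx : x < 5) (hy : y < 5) (h : d5 x y = 1) :
    (x + 1) % 5 = y ∨ (y + 1) % 5 = x := by
  interval_cases x <;> interval_cases y <;> simp_all [d5]

lemma d5_two {x y : ℕ} (hx : x < 5) (hy : y < 5) (h : d5 x y = 2) :
    ∃ z < 5, d5 x z = 1 ∧ d5 z y = 1 := by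
  interval_cases x <;> interval_cases y <;> simp_all [d5] <;> decide

lemma dist_adj_le {k : ℕ} {a b : Fin (3*k) × Fin 5} (h : (Gk k).Adj a b) :
    (Gk k).dist a b ≤ 1 := by
  have := SimpleGraph.dist_le (SimpleGraph.Walk.cons h SimpleGraph.Walk.nil)
  simpa using this

lemma dist_pent_le {k : ℕ} (hk : 1 ≤ k) (i : Fin (3*k)) (x y : Fin 5) :
    (Gk k).dist (i, x) (i, y) ≤ d5 x.val y.val := by
  have hconn := gk_connected hk
  have h2 := d5_le_two x.isLt y.isLt
  interval_cases h : d5 x.val y.val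
  · have : x = y := Fin.ext (d5_zero x.isLt y.isLt h)
    subst this; simp
  · rcases d5_one x.isLt y.isLt h with h1 | h1
    · exact dist_adj_le (adj_pent i x y h1)
    · rw [SimpleGraph.dist_comm]; exact dist_adj_le (adj_pent i y x h1)
  · obtain ⟨z, hz5, hz1, hz2⟩ := d5_two x.isLt y.isLt h
    have t := hconn.dist_triangle (u := ((i, x) : Fin (3*k) × Fin 5))
      (v := ((i, (⟨z, hz5⟩ : Fin 5)) : Fin (3*k) × Fin 5)) (w := ((i, y) : Fin (3*k) × Fin 5))
    have l1 : (Gk k).dist (i, x) (i, ⟨z, hz5⟩) ≤ 1 := by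
      rcases d5_one x.isLt hz5 hz1 with h1 | h1
      · exact dist_adj_le (adj_pent i x ⟨z, hz5⟩ h1)
      · rw [SimpleGraph.dist_comm]; exact dist_adj_le (adj_pent i ⟨z, hz5⟩ x h1)
    have l2 : (Gk k).dist (i, ⟨z, hz5⟩) (i, y) ≤ 1 := by
      rcases d5_one hz5 y.isLt hz2 with h1 | h1
      · exact dist_adj_le (adj_pent i ⟨z, hz5⟩ y h1)
      · rw [SimpleGraph.dist_comm]; exact dist_adj_le (adj_pent i y ⟨z, hz5⟩ h1)
    omega

lemma d5_comm (x y : ℕ) : d5 x y = d5 y x := by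
  simp [d5, Nat.min_comm]

lemma DD_comm (i x j y : ℕ) : DD i x j y = DD j y i x := by
  unfold DD
  rcases lt_trichotomy i j with h | h | h
  · rw [if_neg (by omega), if_pos h, if_neg (by omega), if_neg (by omega),
      d5_comm x 1, d5_comm 4 y]
    omega
  · subst h; rw [if_pos rfl, if_pos rfl, d5_comm]
  · rw [if_neg (by omega), if_neg (by omega), if_neg (by omega), if_pos h,
      d5_comm x 4, d5_comm 1 y]
    omega

lemma dist_le_DD {k : ℕ} (hk : 1 ≤ k) (v u : Fin (3*k) × Fin 5) :
    (Gk k).dist v u ≤ DD v.1.val v.2.val u.1.val u.2.val := by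
  have hconn := gk_connected hk
  suffices H : ∀ n : ℕ, ∀ (i j : Fin (3*k)) (x y : Fin 5), j.val = i.val + n →
      (Gk k).dist (i, x) (j, y) ≤ DD i.val x.val j.val y.val by
    rcases le_or_gt v.1.val u.1.val with hle | hlt
    · obtain ⟨n, hn⟩ := Nat.le.dest hle
      have := H n v.1 u.1 v.2 u.2 hn.symm
      simpa using this
    · obtain ⟨n, hn⟩ := Nat.le.dest hlt.le
      have := H n u.1 v.1 u.2 v.2 hn.symm
      rw [SimpleGraph.dist_comm, DD_comm]
      simpa using this
  intro n
  induction n with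
  | zero =>
    intro i j x y hij
    obtain rfl : i = j := Fin.ext (by omega)
    have := dist_pent_le hk i x y
    simpa [DD] using this
  | succ n ih =>
    intro i j x y hij
    have hi1 : i.val + 1 < 3 * k := by have := j.isLt; omega
    set i' : Fin (3*k) := ⟨i.val + 1, hi1⟩ with hi'
    have t1 := hconn.dist_triangle (u := ((i, x) : Fin (3*k) × Fin 5))
      (v := ((i, (1:Fin 5)) : Fin (3*k) × Fin 5)) (w := ((j, y) : Fin (3*k) × Fin 5))
    have t2 := hconn.dist_triangle (u := ((i, (1:Fin 5)) : Fin (3*k) × Fin 5))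
      (v := ((i', (4:Fin 5)) : Fin (3*k) × Fin 5)) (w := ((j, y) : Fin (3*k) × Fin 5))
    have l1 := dist_pent_le hk i x 1
    have l2 : (Gk k).dist ((i, (1:Fin 5)) : Fin (3*k) × Fin 5) (i', (4:Fin 5)) ≤ 1 :=
      dist_adj_le (adj_cross i i' rfl)
    have l3 := ih i' j (4:Fin 5) y (by simp [hi']; omega)
    -- arithmetic: DD i x j y = d5 x 1 + 1 + DD (i+1) 4 j y
    have harith : d5 x.val 1 + 1 + DD (i.val+1) 4 j.val y.val ≤ DD i.val x.val j.val y.val := by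
      unfold DD
      have hij' : i.val < j.val := by omega
      rcases eq_or_lt_of_le (by omega : i.val + 1 ≤ j.val) with he | hl
      · rw [if_pos he, if_neg (by omega), if_pos hij']
        have : d5 4 4 = 0 := by decide
        omega
      · rw [if_neg (by omega), if_pos hl, if_neg (by omega), if_pos hij']
        have h41 : d5 (4:ℕ) 1 = 2 := by decide
        have h44 : d5 (4:ℕ) (4:ℕ) = 0 := by decide
        omega
    have hv : ((4:Fin 5)).val = 4 := rfl
    have hv1 : ((1:Fin 5)).val = 1 := rfl
    have hv' : i'.val = i.val + 1 := rfl
    simp only [hv'] at l3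
    simp only [show ((4:Fin 5)).val = 4 from rfl, show ((1:Fin 5)).val = 1 from rfl] at l1 l3
    omega

lemma d5_step : ∀ x < 5, ∀ x' < 5, ∀ y < 5,
    ((x+1) % 5 = x' ∨ (x'+1) % 5 = x) → d5 x y ≤ d5 x' y + 1 := by decide

lemma lip_nat (i x i' x' j y : ℕ) (hx : x < 5) (hx' : x' < 5) (hy : y < 5)
    (h : (i = i' ∧ ((x+1) % 5 = x' ∨ (x'+1) % 5 = x)) ∨
         (i + 1 = i' ∧ x = 1 ∧ x' = 4) ∨ (i' + 1 = i ∧ x' = 1 ∧ x = 4)) :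
    DD i x j y ≤ DD i' x' j y + 1 := by
  have hb1 : d5 1 y ≤ 2 := d5_le_two (by norm_num) hy
  have hb4 : d5 4 y ≤ 2 := d5_le_two (by norm_num) hy
  rcases h with ⟨rfl, hstep⟩ | ⟨hii, rfl, rfl⟩ | ⟨hii, rfl, rfl⟩
  · have hsy := d5_step x hx x' hx' y hy hstep
    have hs1 := d5_step x hx x' hx' 1 (by norm_num) hstep
    have hs4 := d5_step x hx x' hx' 4 (by norm_num) hstep
    unfold DD
    split_ifs <;> omega
  · have e11 : d5 1 1 = 0 := by decide
    have e44 : d5 4 4 = 0 := by decide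
    have e14 : d5 1 4 = 2 := by decide
    have e41 : d5 4 1 = 2 := by decide
    unfold DD
    split_ifs <;> omega
  · have e11 : d5 1 1 = 0 := by decide
    have e44 : d5 4 4 = 0 := by decide
    have e14 : d5 1 4 = 2 := by decide
    have e41 : d5 4 1 = 2 := by decide
    unfold DD
    split_ifs <;> omega

lemma lip_adj {k : ℕ} {a b : Fin (3*k) × Fin 5} (c : Fin (3*k) × Fin 5)
    (h : (Gk k).Adj a b) :
    DD a.1.val a.2.val c.1.val c.2.val ≤ DD b.1.val b.2.val c.1.val c.2.val + 1 := by
  rw [Gk, SimpleGraph.fromRel_adj] at h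
  obtain ⟨-, hrel⟩ := h
  apply lip_nat _ _ _ _ _ _ a.2.isLt b.2.isLt c.2.isLt
  rcases hrel with h | h
  · rcases h with ⟨h1, h2⟩ | ⟨h1, h2, h3⟩
    · exact Or.inl ⟨congrArg Fin.val h1, Or.inl h2⟩
    · exact Or.inr (Or.inl ⟨h1, h2, h3⟩)
  · rcases h with ⟨h1, h2⟩ | ⟨h1, h2, h3⟩
    · exact Or.inl ⟨(congrArg Fin.val h1).symm, Or.inr h2⟩
    · exact Or.inr (Or.inr ⟨h1, h2, h3⟩)

lemma DD_le_length {k : ℕ} {a c : Fin (3*k) × Fin 5} (p : (Gk k).Walk a c) :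
    DD a.1.val a.2.val c.1.val c.2.val ≤ p.length := by
  induction p with
  | nil => simp [DD_self]
  | cons h q ih =>
    simp only [SimpleGraph.Walk.length_cons]
    exact le_trans (lip_adj _ h) (Nat.add_le_add_right ih 1)

lemma DD_le_dist {k : ℕ} (hk : 1 ≤ k) (v u : Fin (3*k) × Fin 5) :
    DD v.1.val v.2.val u.1.val u.2.val ≤ (Gk k).dist v u := by
  have hconn := gk_connected hk
  obtain ⟨p, hp⟩ := SimpleGraph.Reachable.exists_walk_length_eq_dist (hconn.preconnected v u)
  calc DD v.1.val v.2.val u.1.val u.2.val ≤ p.length := DD_le_length p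
  _ = _ := hp

def pat (cl x : ℕ) : ℕ :=
  if (cl % 3 = 0 ∧ (x = 2 ∨ x = 3)) ∨ (cl % 3 = 1 ∧ (x = 1 ∨ x = 3 ∨ x = 4)) ∨
     (cl % 3 = 2 ∧ (x = 1 ∨ x = 2 ∨ x = 4)) then 1 else 0

def psz (cl : ℕ) : ℕ := if cl % 3 = 0 then 2 else 3

def cnt (cl a s : ℕ) : ℕ := ∑ y ∈ Finset.range 5, if d5 a y ≤ s then pat cl y else 0

def TR (cl x r t : ℕ) : ℕ :=
  if d5 x 1 + 3*t ≤ r + 2 then cnt (cl + t) 4 (r + 2 - (d5 x 1 + 3*t)) else 0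

def TL (cl x r t : ℕ) : ℕ :=
  if d5 x 4 + 3*t ≤ r + 2 then cnt (cl + 2*t) 1 (r + 2 - (d5 x 4 + 3*t)) else 0

def BB (cl x r : ℕ) : ℕ :=
  cnt cl x r + (∑ t ∈ Finset.range r, TR cl x r (t+1)) + (∑ t ∈ Finset.range r, TL cl x r (t+1))

lemma pat_mod {cl cl' : ℕ} (h : cl % 3 = cl' % 3) (y : ℕ) : pat cl y = pat cl' y := by
  unfold pat; rw [h]

lemma cnt_mod {cl cl' : ℕ} (h : cl % 3 = cl' % 3) (a s : ℕ) : cnt cl a s = cnt cl' a s := by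
  unfold cnt
  exact Finset.sum_congr rfl fun y _ => by rw [pat_mod h]

lemma pat_total (cl : ℕ) : ∑ y ∈ Finset.range 5, pat cl y = psz cl := by
  have h3 : cl % 3 = 0 ∨ cl % 3 = 1 ∨ cl % 3 = 2 := by omega
  rcases h3 with h|h|h <;> simp [Finset.sum_range_succ, pat, psz, h] <;> decide

lemma cnt_sat {cl a s : ℕ} (ha : a < 5) (hs : 2 ≤ s) : cnt cl a s = psz cl := by
  unfold cnt
  rw [Finset.sum_congr rfl fun y hy =>
    if_pos (le_trans (d5_le_two ha (Finset.mem_range.mp hy)) hs)]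
  exact pat_total cl

lemma psz3 (cl : ℕ) : psz (cl+1) + psz (cl+2) + psz (cl+3) = 8 := by
  unfold psz; split_ifs <;> omega

lemma TR_zero {cl x r t : ℕ} (h : r + 1 ≤ t) : TR cl x r t = 0 := by
  unfold TR; rw [if_neg (by omega)]

lemma TL_zero {cl x r t : ℕ} (h : r + 1 ≤ t) : TL cl x r t = 0 := by
  unfold TL; rw [if_neg (by omega)]

lemma sum_range_le_sum_range {g : ℕ → ℕ} {r : ℕ} (hg : ∀ t, r ≤ t → g t = 0) (N : ℕ) :
    ∑ t ∈ Finset.range N, g t ≤ ∑ t ∈ Finset.range r, g t := by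
  rcases le_total N r with h | h
  · exact Finset.sum_le_sum_of_subset (Finset.range_subset_range.mpr h)
  · rw [← Finset.sum_subset (Finset.range_subset_range.mpr h)
      (fun x hx hnx => hg x (by simp at hnx; omega))]

lemma BB_mod (cl x r : ℕ) : BB cl x r = BB (cl % 3) x r := by
  unfold BB
  have h1 : cnt cl x r = cnt (cl % 3) x r := cnt_mod (by omega) x r
  have h2 : ∀ t : ℕ, TR cl x r (t+1) = TR (cl % 3) x r (t+1) := by
    intro t
    unfold TR
    split_ifs with h
    · exact cnt_mod (by omega) _ _
    · rfl
  have h3 : ∀ t : ℕ, TL cl x r (t+1) = TL (cl % 3) x r (t+1) := by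
    intro t
    unfold TL
    split_ifs with h
    · exact cnt_mod (by omega) _ _
    · rfl
  rw [h1, Finset.sum_congr rfl (fun t _ => h2 t), Finset.sum_congr rfl (fun t _ => h3 t)]

lemma BB_base : ∀ cl < 3, ∀ x < 5, ∀ r < 11, 1 ≤ r → BB cl x r ≤ 2*r := by decide

lemma sum_TR_split (cl x q n : ℕ) :
    ∑ t ∈ Finset.range (n+3), TR cl x q (t+1)
      = TR cl x q 1 + TR cl x q 2 + TR cl x q 3 + ∑ t ∈ Finset.range n, TR cl x q (t+4) := by
  induction n with
  | zero => simp [Finset.sum_range_succ]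
  | succ n ih =>
    rw [show n+1+3 = (n+3)+1 from rfl, Finset.sum_range_succ, ih, Finset.sum_range_succ,
      show n+3+1 = n+4 from rfl]
    ring

lemma sum_TL_split (cl x q n : ℕ) :
    ∑ t ∈ Finset.range (n+3), TL cl x q (t+1)
      = TL cl x q 1 + TL cl x q 2 + TL cl x q 3 + ∑ t ∈ Finset.range n, TL cl x q (t+4) := by
  induction n with
  | zero => simp [Finset.sum_range_succ]
  | succ n ih =>
    rw [show n+1+3 = (n+3)+1 from rfl, Finset.sum_range_succ, ih, Finset.sum_range_succ,
      show n+3+1 = n+4 from rfl]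
    ring

lemma BB_step (cl x r : ℕ) (hx : x < 5) (hr : 2 ≤ r) : BB cl x (r+9) = BB cl x r + 16 := by
  have hd1 : d5 x 1 ≤ 2 := d5_le_two hx (by norm_num)
  have hd4 : d5 x 4 ≤ 2 := d5_le_two hx (by norm_num)
  have hc : cnt cl x (r+9) = cnt cl x r := by
    rw [cnt_sat hx (by omega), cnt_sat hx (by omega)]
  have hR : (∑ t ∈ Finset.range (r+9), TR cl x (r+9) (t+1))
      = (∑ t ∈ Finset.range r, TR cl x r (t+1)) + 8 := by
    have c1 : ∑ t ∈ Finset.range (r+9), TR cl x (r+9) (t+1)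
        = ∑ t ∈ Finset.range ((r+6)+3), TR cl x (r+9) (t+1) :=
      Finset.sum_congr (by rw [show r+9 = (r+6)+3 from by omega]) (fun _ _ => rfl)
    rw [c1, sum_TR_split cl x (r+9) (r+6)]
    have hshift : ∀ t : ℕ, TR cl x (r+9) (t+4) = TR cl x r (t+1) := by
      intro t
      unfold TR
      by_cases h : d5 x 1 + 3*(t+1) ≤ r + 2
      · rw [if_pos (by omega), if_pos h,
          cnt_mod (by omega : (cl+(t+4)) % 3 = (cl+(t+1)) % 3)]
        congr 1
        omega
      · rw [if_neg (by omega), if_neg h]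
    rw [Finset.sum_congr rfl (fun t _ => hshift t)]
    have hfull : ∀ s, 1 ≤ s → s ≤ 3 → TR cl x (r+9) s = psz (cl + s) := by
      intro s h1 h3
      unfold TR
      rw [if_pos (by omega), cnt_sat (by norm_num) (by omega)]
    have e1 := hfull 1 (by omega) (by omega)
    have e2 := hfull 2 (by omega) (by omega)
    have e3 := hfull 3 (by omega) (by omega)
    have e8 := psz3 cl
    have hcut : (∑ t ∈ Finset.range (r+6), TR cl x r (t+1)) = ∑ t ∈ Finset.range r, TR cl x r (t+1) := by
      rw [← Finset.sum_subset (Finset.range_subset_range.mpr (by omega : r ≤ r + 6))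
        (fun t ht hnt => TR_zero (by simp at hnt; omega))]
    rw [hcut]
    omega
  have hL : (∑ t ∈ Finset.range (r+9), TL cl x (r+9) (t+1))
      = (∑ t ∈ Finset.range r, TL cl x r (t+1)) + 8 := by
    have c1 : ∑ t ∈ Finset.range (r+9), TL cl x (r+9) (t+1)
        = ∑ t ∈ Finset.range ((r+6)+3), TL cl x (r+9) (t+1) :=
      Finset.sum_congr (by rw [show r+9 = (r+6)+3 from by omega]) (fun _ _ => rfl)
    rw [c1, sum_TL_split cl x (r+9) (r+6)]
    have hshift : ∀ t : ℕ, TL cl x (r+9) (t+4) = TL cl x r (t+1) := by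
      intro t
      unfold TL
      by_cases h : d5 x 4 + 3*(t+1) ≤ r + 2
      · rw [if_pos (by omega), if_pos h,
          cnt_mod (by omega : (cl+2*(t+4)) % 3 = (cl+2*(t+1)) % 3)]
        congr 1
        omega
      · rw [if_neg (by omega), if_neg h]
    rw [Finset.sum_congr rfl (fun t _ => hshift t)]
    have hfull : ∀ s, 1 ≤ s → s ≤ 3 → TL cl x (r+9) s = psz (cl + 2*s) := by
      intro s h1 h3
      unfold TL
      rw [if_pos (by omega), cnt_sat (by norm_num) (by omega)]
    have e1 := hfull 1 (by omega) (by omega)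
    have e2 := hfull 2 (by omega) (by omega)
    have e3 := hfull 3 (by omega) (by omega)
    have e8 : psz (cl + 2*1) + psz (cl + 2*2) + psz (cl + 2*3) = 8 := by
      unfold psz; split_ifs <;> omega
    have hcut : (∑ t ∈ Finset.range (r+6), TL cl x r (t+1)) = ∑ t ∈ Finset.range r, TL cl x r (t+1) := by
      rw [← Finset.sum_subset (Finset.range_subset_range.mpr (by omega : r ≤ r + 6))
        (fun t ht hnt => TL_zero (by simp at hnt; omega))]
    rw [hcut]
    omega
  unfold BB
  omega

lemma BB_le (cl x r : ℕ) (hx : x < 5) (hr : 1 ≤ r) : BB cl x r ≤ 2 * r := by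
  rw [BB_mod]
  induction r using Nat.strong_induction_on with
  | _ r ih =>
    rcases le_or_gt r 10 with h | h
    · exact BB_base (cl % 3) (by omega) x hx r (by omega) hr
    · have h9 : r = (r - 9) + 9 := by omega
      rw [h9, BB_step (cl % 3) x (r-9) hx (by omega)]
      have := ih (r - 9) (by omega) (by omega)
      omega

def mw (k : ℕ) (v : Fin (3*k) × Fin 5) : ℕ := pat v.1.val v.2.val

lemma ball_le {k : ℕ} (hk : 1 ≤ k) (v : Fin (3*k) × Fin 5) (r : ℕ) (hr : 1 ≤ r) :
    ∑ u ∈ Finset.univ.filter (fun u => (Gk k).dist v u ≤ r), mw k u ≤ 2 * r := by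
  obtain ⟨i, x⟩ := v
  -- replace dist by DD
  have step1 : ∑ u ∈ Finset.univ.filter (fun u => (Gk k).dist (i,x) u ≤ r), mw k u
      ≤ ∑ u ∈ Finset.univ.filter
          (fun u : Fin (3*k) × Fin 5 => DD i.val x.val u.1.val u.2.val ≤ r), mw k u := by
    apply Finset.sum_le_sum_of_subset
    intro u hu
    simp only [Finset.mem_filter, Finset.mem_univ, true_and] at hu ⊢
    exact le_trans (DD_le_dist hk (i,x) u) hu
  refine le_trans step1 ?_
  rw [Finset.sum_filter]
  rw [show (∑ u : Fin (3*k) × Fin 5,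
        if DD i.val x.val u.1.val u.2.val ≤ r then mw k u else 0)
      = ∑ j : Fin (3*k), ∑ y : Fin 5,
        if DD i.val x.val j.val y.val ≤ r then pat j.val y.val else 0 from
    Fintype.sum_prod_type _]
  -- convert to nat range sums
  have inner : ∀ j : Fin (3*k),
      (∑ y : Fin 5, if DD i.val x.val j.val y.val ≤ r then pat j.val y.val else 0)
      = ∑ y ∈ Finset.range 5, if DD i.val x.val j.val y ≤ r then pat j.val y else 0 := by
    intro j
    exact Fin.sum_univ_eq_sum_range (fun y => if DD i.val x.val j.val y ≤ r then pat j.val y else 0) 5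
  rw [Finset.sum_congr rfl (fun j _ => inner j)]
  set F : ℕ → ℕ := fun j =>
    ∑ y ∈ Finset.range 5, if DD i.val x.val j y ≤ r then pat j y else 0 with hF
  rw [show (∑ j : Fin (3*k), F j.val) = ∑ j ∈ Finset.range (3*k), F j from
    Fin.sum_univ_eq_sum_range _ _]
  -- split the range at i
  have hi : i.val < 3*k := i.isLt
  have hsplit : ∑ j ∈ Finset.range (3*k), F j
      = (∑ j ∈ Finset.range i.val, F j) + F i.val + ∑ j ∈ Finset.Ico (i.val+1) (3*k), F j := by
    rw [Finset.range_eq_Ico, ← Finset.sum_Ico_consecutive _ (by omega : 0 ≤ i.val+1) (by omega : i.val+1 ≤ 3*k),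
      ← Finset.range_eq_Ico, Finset.sum_range_succ]
  rw [hsplit]
  -- center
  have hcenter : F i.val = cnt i.val x.val r := by
    apply Finset.sum_congr rfl
    intro y hy
    have : DD i.val x.val i.val y = d5 x.val y := by unfold DD; rw [if_pos rfl]
    rw [this]
  -- right side
  have hright : ∑ j ∈ Finset.Ico (i.val+1) (3*k), F j
      ≤ ∑ t ∈ Finset.range r, TR i.val x.val r (t+1) := by
    rw [Finset.sum_Ico_eq_sum_range]
    have hterm : ∀ t : ℕ, F (i.val + 1 + t) = TR i.val x.val r (t+1) := by
      intro t
      unfold F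
      unfold TR
      by_cases h : d5 x.val 1 + 3*(t+1) ≤ r + 2
      · rw [if_pos h]
        unfold cnt
        apply Finset.sum_congr rfl
        intro y hy
        have hDD : DD i.val x.val (i.val+1+t) y
            = d5 x.val 1 + 3*(t+1) - 2 + d5 4 y := by
          unfold DD
          rw [if_neg (by omega), if_pos (by omega)]
          congr 2
          omega
        rw [hDD, pat_mod (by omega : (i.val+1+t) % 3 = (i.val+(t+1)) % 3)]
        have hd4y : d5 4 y ≤ 2 := d5_le_two (by norm_num) (Finset.mem_range.mp hy)
        by_cases h2 : d5 4 y ≤ r + 2 - (d5 x.val 1 + 3*(t+1))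
        · rw [if_pos (by omega), if_pos h2]
        · rw [if_neg (by omega), if_neg h2]
      · rw [if_neg h]
        apply Finset.sum_eq_zero
        intro y hy
        rw [if_neg (by
          unfold DD
          rw [if_neg (by omega), if_pos (by omega)]
          omega)]
    rw [Finset.sum_congr rfl (fun t _ => hterm t)]
    exact sum_range_le_sum_range (fun t ht => TR_zero (by omega)) _
  -- left side
  have hleft : ∑ j ∈ Finset.range i.val, F j
      ≤ ∑ t ∈ Finset.range r, TL i.val x.val r (t+1) := by
    rw [← Finset.sum_range_reflect]
    have hterm : ∀ t : ℕ, t < i.val → F (i.val - 1 - t) = TL i.val x.val r (t+1) := by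
      intro t ht
      unfold F
      unfold TL
      by_cases h : d5 x.val 4 + 3*(t+1) ≤ r + 2
      · rw [if_pos h]
        unfold cnt
        apply Finset.sum_congr rfl
        intro y hy
        have hDD : DD i.val x.val (i.val-1-t) y
            = d5 x.val 4 + 3*(t+1) - 2 + d5 1 y := by
          unfold DD
          rw [if_neg (by omega), if_neg (by omega)]
          congr 2
          omega
        rw [hDD, pat_mod (by omega : (i.val-1-t) % 3 = (i.val+2*(t+1)) % 3)]
        have hd1y : d5 1 y ≤ 2 := d5_le_two (by norm_num) (Finset.mem_range.mp hy)
        by_cases h2 : d5 1 y ≤ r + 2 - (d5 x.val 4 + 3*(t+1))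
        · rw [if_pos (by omega), if_pos h2]
        · rw [if_neg (by omega), if_neg h2]
      · rw [if_neg h]
        apply Finset.sum_eq_zero
        intro y hy
        rw [if_neg (by
          unfold DD
          rw [if_neg (by omega), if_neg (by omega)]
          omega)]
    rw [Finset.sum_congr rfl (fun t ht => hterm t (Finset.mem_range.mp ht))]
    exact sum_range_le_sum_range (fun t ht => TL_zero (by omega)) _
  have hBB := BB_le i.val x.val r x.isLt hr
  unfold BB at hBB
  rw [hcenter]
  omega

-- total weight of mw
lemma psz_sum (k : ℕ) : ∑ j ∈ Finset.range (3*k), psz j = 8 * k := by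
  induction k with
  | zero => simp
  | succ k ih =>
    have h3 : 3*(k+1) = (3*k)+1+1+1 := by omega
    rw [h3, Finset.sum_range_succ, Finset.sum_range_succ, Finset.sum_range_succ, ih]
    have e0 : psz (3*k) = 2 := by unfold psz; split_ifs <;> omega
    have e1 : psz (3*k+1) = 3 := by unfold psz; split_ifs <;> omega
    have e2 : psz (3*k+1+1) = 3 := by unfold psz; split_ifs <;> omega
    have e2' : psz (3*k+2) = 3 := by unfold psz; split_ifs <;> omega
    omega

lemma mw_total (k : ℕ) : ∑ u : Fin (3*k) × Fin 5, mw k u = 8 * k := by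
  rw [Fintype.sum_prod_type]
  have inner : ∀ j : Fin (3*k), (∑ y : Fin 5, mw k (j, y)) = psz j.val := by
    intro j
    rw [show (∑ y : Fin 5, mw k (j, y)) = ∑ y ∈ Finset.range 5, pat j.val y from
      Fin.sum_univ_eq_sum_range (fun y => pat j.val y) 5]
    exact pat_total j.val
  rw [Finset.sum_congr rfl (fun j _ => inner j),
    show (∑ j : Fin (3*k), psz j.val) = ∑ j ∈ Finset.range (3*k), psz j from
      Fin.sum_univ_eq_sum_range _ _]
  exact psz_sum k

-- lower bound
lemma lower_bound {k : ℕ} (hk : 1 ≤ k) (f : Fin (3*k) × Fin 5 → ℕ)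
    (hdom : ∀ u, ∃ v, 1 ≤ f v ∧ (Gk k).dist u v ≤ f v) :
    4 * k ≤ ∑ v, f v := by
  classical
  choose g hg1 hg2 using hdom
  have key : ∀ v : Fin (3*k) × Fin 5,
      (∑ u ∈ Finset.univ.filter (fun u => g u = v), mw k u) ≤ 2 * f v := by
    intro v
    rcases Finset.eq_empty_or_nonempty (Finset.univ.filter (fun u => g u = v)) with he | hne
    · rw [he]; simp
    · obtain ⟨u0, hu0⟩ := hne
      simp only [Finset.mem_filter, Finset.mem_univ, true_and] at hu0
      have hfv : 1 ≤ f v := hu0 ▸ hg1 u0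
      calc (∑ u ∈ Finset.univ.filter (fun u => g u = v), mw k u)
          ≤ ∑ u ∈ Finset.univ.filter (fun u => (Gk k).dist v u ≤ f v), mw k u := by
            apply Finset.sum_le_sum_of_subset
            intro u hu
            simp only [Finset.mem_filter, Finset.mem_univ, true_and] at hu ⊢
            rw [SimpleGraph.dist_comm]
            have := hg2 u
            rw [hu] at this
            exact this
        _ ≤ 2 * f v := ball_le hk v (f v) hfv
  have hfib : ∑ v : Fin (3*k) × Fin 5,
      (∑ u ∈ Finset.univ.filter (fun u => g u = v), mw k u) = ∑ u, mw k u :=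
    Finset.sum_fiberwise Finset.univ g (mw k)
  have h2 : (∑ v : Fin (3*k) × Fin 5,
      (∑ u ∈ Finset.univ.filter (fun u => g u = v), mw k u)) ≤ ∑ v, 2 * f v :=
    Finset.sum_le_sum (fun v _ => key v)
  rw [hfib, mw_total] at h2
  have h3 : (∑ v : Fin (3*k) × Fin 5, 2 * f v) = 2 * ∑ v, f v := by
    rw [Finset.mul_sum]
  omega

def f0 (k : ℕ) (v : Fin (3*k) × Fin 5) : ℕ :=
  if v.1.val % 3 = 1 ∧ v.2.val = 0 then 4 else 0

lemma gdiam_ge {k : ℕ} (hk : 1 ≤ k) : 4 ≤ gdiam (Gk k) := by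
  have h1 : (0:ℕ) < 3*k := by omega
  have h2 : 3*k-1 < 3*k := by omega
  set v0 : Fin (3*k) × Fin 5 := (⟨0, h1⟩, ⟨2, by norm_num⟩)
  set u0 : Fin (3*k) × Fin 5 := (⟨3*k-1, h2⟩, ⟨2, by norm_num⟩)
  have hDD : 4 ≤ DD 0 2 (3*k-1) 2 := by
    unfold DD
    rw [if_neg (by omega), if_pos (by omega)]
    have e1 : d5 2 1 = 1 := by decide
    have e2 : d5 4 2 = 2 := by decide
    omega
  have hdist : 4 ≤ (Gk k).dist v0 u0 := le_trans hDD (DD_le_dist hk v0 u0)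
  calc (4:ℕ) ≤ (Gk k).dist v0 u0 := hdist
    _ ≤ ecc (Gk k) v0 := Finset.le_sup (Finset.mem_univ u0)
    _ ≤ gdiam (Gk k) := Finset.le_sup (Finset.mem_univ v0)

lemma f0_dom {k : ℕ} (hk : 1 ≤ k) : IsDomBroadcast (Gk k) (f0 k) := by
  constructor
  · intro v
    unfold f0
    split_ifs
    · exact gdiam_ge hk
    · exact Nat.zero_le _
  · intro u
    have hj : 3*(u.1.val/3)+1 < 3*k := by have := u.1.isLt; omega
    refine ⟨(⟨3*(u.1.val/3)+1, hj⟩, (0 : Fin 5)), ?_, ?_⟩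
    · unfold f0
      rw [if_pos ⟨by simp, rfl⟩]
      omega
    · have hb : (Gk k).dist u (⟨3*(u.1.val/3)+1, hj⟩, (0 : Fin 5)) ≤
          DD u.1.val u.2.val (3*(u.1.val/3)+1) 0 := by
        have := dist_le_DD hk u (⟨3*(u.1.val/3)+1, hj⟩, (0 : Fin 5))
        simpa using this
      have hDD : DD u.1.val u.2.val (3*(u.1.val/3)+1) 0 ≤ 4 := by
        have c1 : d5 u.2.val 1 ≤ 2 := d5_le_two u.2.isLt (by norm_num)
        have c2 : d5 u.2.val 4 ≤ 2 := d5_le_two u.2.isLt (by norm_num)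
        have c3 : d5 u.2.val 0 ≤ 2 := d5_le_two u.2.isLt (by norm_num)
        have c4 : d5 4 0 = 1 := by decide
        have c5 : d5 1 0 = 1 := by decide
        unfold DD
        split_ifs <;> omega
      have hf : f0 k (⟨3*(u.1.val/3)+1, hj⟩, (0 : Fin 5)) = 4 := by
        unfold f0
        rw [if_pos ⟨by simp, rfl⟩]
      rw [hf]
      exact le_trans hb hDD

lemma range_sum_four (k : ℕ) :
    (∑ j ∈ Finset.range (3*k), (if j % 3 = 1 then 4 else 0)) = 4 * k := by
  induction k with
  | zero => simp
  | succ k ih =>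
    have h3 : 3*(k+1) = (3*k)+1+1+1 := by omega
    rw [h3, Finset.sum_range_succ, Finset.sum_range_succ, Finset.sum_range_succ, ih]
    have e0 : ¬ ((3*k) % 3 = 1) := by omega
    have e1 : (3*k+1) % 3 = 1 := by omega
    have e2 : ¬ ((3*k+1+1) % 3 = 1) := by omega
    rw [if_neg e0, if_pos e1, if_neg e2]
    omega

lemma f0_sum {k : ℕ} : ∑ v : Fin (3*k) × Fin 5, f0 k v = 4 * k := by
  rw [Fintype.sum_prod_type]
  have inner : ∀ j : Fin (3*k), (∑ y : Fin 5, f0 k (j, y))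
      = (if j.val % 3 = 1 then 4 else 0) := by
    intro j
    by_cases h : j.val % 3 = 1
    · simp [f0, Fin.sum_univ_five, h]
    · simp [f0, Fin.sum_univ_five, h]
  rw [Finset.sum_congr rfl (fun j _ => inner j),
    Fin.sum_univ_eq_sum_range (fun j => if j % 3 = 1 then 4 else 0) (3*k)]
  exact range_sum_four k

theorem gammaB_Gk (k : ℕ) (hk : 1 ≤ k) : gammaB (Gk k) = 4 * k := by
  have hmem : 4 * k ∈ {n | ∃ f : Fin (3*k) × Fin 5 → ℕ,
      IsDomBroadcast (Gk k) f ∧ ∑ v, f v = n} := ⟨f0 k, f0_dom hk, f0_sum⟩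
  apply le_antisymm
  · exact Nat.sInf_le hmem
  · obtain ⟨f, hf, hfs⟩ := Nat.sInf_mem (Set.nonempty_of_mem hmem)
    rw [gammaB, ← hfs]
    exact lower_bound hk f hf.2
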